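/- Let T be an analytic bounded expansive operator on a Hilbert space H whose spectrum is contained in the closed unit disc, and suppose the Cauchy dual T' has a finite-dimensional nonzero invariant subspace M on which T' restricts to an invertible operator. Then T' restricted to M has an eigenvector g with eigenvalue λ of modulus 1, and then Tg = λg, contradicting analyticity; hence no such nonzero finite-dimensional M exists. In particular, the hyper-range of T' is either zero or infinite-dimensional. -/

import Mathlib

open ContinuousLinearMap

/-- Key contradiction: an eigenvector of the Cauchy dual T' = T∘S contradicts analyticity. -/
theorem stmt_5_aux {H : Type*} [NormedAddCommGroup H] [InnerProductSpace ℂ H]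
    [CompleteSpace H] (T S : H →L[ℂ] H)
    (hexp : ∀ x : H, ‖x‖ ≤ ‖T x‖)
    (hanalytic : (⋂ n : ℕ, Set.range ⇑(T ^ n)) = {0})
    (hspec : spectrum ℂ T ⊆ Metric.closedBall 0 1)
    (hS₁ : (adjoint T ∘L T) ∘L S = 1)
    (μ : ℂ) (g : H) (hg : g ≠ 0) (heig : T (S g) = μ • g) : False := by
  have key : ∀ x : H, adjoint T (T (S x)) = x := by
    intro x
    have := congrArg (fun f : H →L[ℂ] H => f x) hS₁
    simpa [comp_apply] using this
  -- T' is a contraction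
  have contr : ∀ x : H, ‖T (S x)‖ ≤ ‖x‖ := by
    intro x
    have h1 : (inner ℂ x (S x) : ℂ) = inner ℂ (T (S x)) (T (S x)) := by
      have h := adjoint_inner_left T (S x) (T (S x))
      rw [key x] at h
      exact h
    have h2 : ‖T (S x)‖ ^ 2 ≤ ‖x‖ * ‖T (S x)‖ := by
      have h3 : RCLike.re (inner ℂ (T (S x)) (T (S x)) : ℂ) = ‖T (S x)‖ ^ 2 :=
        inner_self_eq_norm_sq _
      have h4 : RCLike.re (inner ℂ x (S x) : ℂ) ≤ ‖(inner ℂ x (S x) : ℂ)‖ :=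
        RCLike.re_le_norm _
      have h5 : ‖(inner ℂ x (S x) : ℂ)‖ ≤ ‖x‖ * ‖S x‖ := norm_inner_le_norm _ _
      have h6 : ‖S x‖ ≤ ‖T (S x)‖ := hexp (S x)
      nlinarith [norm_nonneg x, norm_nonneg (S x), norm_nonneg (T (S x)), h1 ▸ h3]
    by_cases hz : ‖T (S x)‖ = 0
    · rw [hz]; exact norm_nonneg x
    · have hzpos : 0 < ‖T (S x)‖ := lt_of_le_of_ne (norm_nonneg _) (Ne.symm hz)
      nlinarith
  -- μ ≠ 0
  have hμ0 : μ ≠ 0 := by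
    intro h
    apply hg
    have := key g
    rw [heig, h, zero_smul, map_zero] at this
    exact this.symm
  -- adjoint T g = μ⁻¹ • g
  have hadj : adjoint T g = μ⁻¹ • g := by
    have := key g
    rw [heig, map_smul] at this
    calc adjoint T g = μ⁻¹ • (μ • adjoint T g) := by
          rw [smul_smul, inv_mul_cancel₀ hμ0, one_smul]
      _ = μ⁻¹ • g := by rw [this]
  -- |μ| ≤ 1
  have hle : ‖μ‖ ≤ 1 := by
    have := contr g
    rw [heig, norm_smul] at this
    have hgpos : 0 < ‖g‖ := norm_pos_iff.mpr hg
    nlinarith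
  -- conj μ⁻¹ ∈ spectrum T
  have hspec' : (starRingEnd ℂ) μ⁻¹ ∈ spectrum ℂ T := by
    rw [spectrum.mem_iff]
    intro hu
    have hu' := hu.star
    have hstar : star ((algebraMap ℂ (H →L[ℂ] H)) ((starRingEnd ℂ) μ⁻¹) - T)
        = (algebraMap ℂ (H →L[ℂ] H)) μ⁻¹ - adjoint T := by
      rw [star_sub, ← algebraMap_star_comm, star_eq_adjoint]
      simp
    rw [hstar] at hu'
    obtain ⟨u, hu2⟩ := hu'
    have h0 : ((algebraMap ℂ (H →L[ℂ] H)) μ⁻¹ - adjoint T) g = 0 := by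
      simp [sub_apply, hadj, Algebra.algebraMap_eq_smul_one]
    have : g = 0 := by
      have := congrArg (fun f : H →L[ℂ] H => f g) u.inv_mul
      simp only [mul_apply_eq_comp, one_apply_eq_self] at this
      rw [hu2, h0, map_zero] at this
      exact this.symm
    exact hg this
  -- hence ‖μ‖ = 1
  have hμ1 : ‖μ‖ = 1 := by
    have := hspec hspec'
    rw [mem_closedBall_zero_iff] at this
    have h7 : ‖μ⁻¹‖ ≤ 1 := by rwa [RingHomIsometric.norm_map] at this
    rw [norm_inv] at h7
    have hμpos : 0 < ‖μ‖ := norm_pos_iff.mpr hμ0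
    have : 1 ≤ ‖μ‖ := by
      rw [inv_le_one_iff₀] at h7
      rcases h7 with h | h
      · exact absurd h (not_le.mpr hμpos)
      · exact h
    linarith
  -- S g = g
  have hSg : S g = g := by
    have hin : (inner ℂ g (S g) : ℂ) = inner ℂ (T (S g)) (T (S g)) := by
      have h := adjoint_inner_left T (S g) (T (S g))
      rw [key g] at h
      exact h
    have hre : RCLike.re (inner ℂ g (S g) : ℂ) = ‖g‖ ^ 2 := by
      rw [hin, inner_self_eq_norm_sq, heig, norm_smul, hμ1, one_mul]
    have hSgle : ‖S g‖ ≤ ‖g‖ := by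
      have := hexp (S g)
      rw [heig, norm_smul, hμ1, one_mul] at this
      exact this
    have hre2 : RCLike.re (inner ℂ (S g) g : ℂ) = ‖g‖ ^ 2 := by
      rw [inner_re_symm]
      exact hre
    have hsq : ‖S g - g‖ ^ 2 ≤ 0 := by
      rw [norm_sub_sq (𝕜 := ℂ), hre2]
      nlinarith [norm_nonneg (S g), norm_nonneg g, hSgle]
    have : ‖S g - g‖ = 0 := le_antisymm (by nlinarith [norm_nonneg (S g - g)]) (norm_nonneg _)
    rw [norm_eq_zero, sub_eq_zero] at this
    exact this
  -- T g = μ • g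
  have hTg : T g = μ • g := by rw [← heig, hSg]
  -- T^n g = μ^n • g
  have hTn : ∀ n : ℕ, (T ^ n) g = μ ^ n • g := by
    intro n
    induction n with
    | zero => simp
    | succ n ih =>
      rw [pow_succ, mul_apply_eq_comp, hTg, map_smul, ih, smul_smul, ← pow_succ']
  -- conj μ * μ = 1
  have hconj : (starRingEnd ℂ) μ * μ = 1 := by
    have h8 : Complex.normSq μ = 1 := by
      rw [Complex.normSq_eq_norm_sq, hμ1, one_pow]
    rw [← Complex.normSq_eq_conj_mul_self, h8, Complex.ofReal_one]
  -- g ∈ ⋂ range T^n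
  have hmem : g ∈ ⋂ n : ℕ, Set.range ⇑(T ^ n) := by
    rw [Set.mem_iInter]
    intro n
    refine ⟨((starRingEnd ℂ) μ) ^ n • g, ?_⟩
    rw [map_smul, hTn n, smul_smul, ← mul_pow, hconj, one_pow, one_smul]
  rw [hanalytic] at hmem
  exact hg hmem

theorem stmt_5 {H : Type*} [NormedAddCommGroup H] [InnerProductSpace ℂ H]
    [CompleteSpace H] (T : H →L[ℂ] H)
    (hexp : ∀ x : H, ‖x‖ ≤ ‖T x‖)
    (hanalytic : (⋂ n : ℕ, Set.range ⇑(T ^ n)) = {0})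
    (hspec : spectrum ℂ T ⊆ Metric.closedBall 0 1)
    (S : H →L[ℂ] H)
    (hS₁ : (adjoint T ∘L T) ∘L S = 1) (hS₂ : S ∘L (adjoint T ∘L T) = 1) :
    (∀ M : Submodule ℂ H, FiniteDimensional ℂ M →
        (∀ x ∈ M, (T ∘L S) x ∈ M) →
        (Set.InjOn ⇑(T ∘L S) M) →
        (∀ y ∈ M, ∃ x ∈ M, (T ∘L S) x = y) →
        M = ⊥) ∧
      ((⨅ n : ℕ, LinearMap.range (((T ∘L S) ^ n) : H →ₗ[ℂ] H)) = ⊥ ∨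
        ¬ FiniteDimensional ℂ
          (⨅ n : ℕ, LinearMap.range (((T ∘L S) ^ n) : H →ₗ[ℂ] H) : Submodule ℂ H)) := by
  have main : ∀ M : Submodule ℂ H, FiniteDimensional ℂ M →
      (∀ x ∈ M, (T ∘L S) x ∈ M) → M = ⊥ := by
    intro M hfin hinv
    by_contra hM
    haveI : Nontrivial M := Submodule.nontrivial_iff_ne_bot.mpr hM
    let f : M →ₗ[ℂ] M := LinearMap.restrict ((T ∘L S) : H →ₗ[ℂ] H) hinv
    obtain ⟨μ, hμ⟩ := Module.End.exists_eigenvalue f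
    obtain ⟨g, hgv⟩ := hμ.exists_hasEigenvector
    have hgne : (g : H) ≠ 0 := fun h => hgv.right (Subtype.coe_injective (by simpa using h))
    have heig : T (S (g : H)) = μ • (g : H) := by
      have h1 := hgv.apply_eq_smul
      have h2 : ((f g : M) : H) = (T ∘L S) (g : H) :=
        LinearMap.restrict_coe_apply _ hinv g
      rw [h1] at h2
      simpa [comp_apply] using h2.symm
    exact stmt_5_aux T S hexp hanalytic hspec hS₁ μ (g : H) hgne heig
  constructor
  · intro M hfin hinv _ _
    exact main M hfin hinv
  · set M := ⨅ n : ℕ, LinearMap.range (((T ∘L S) ^ n) : H →ₗ[ℂ] H) with hM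
    have hinv : ∀ x ∈ M, (T ∘L S) x ∈ M := by
      intro x hx
      rw [hM, Submodule.mem_iInf] at hx ⊢
      intro n
      obtain ⟨w, hw⟩ := hx n
      refine ⟨((T ∘L S) : H →ₗ[ℂ] H) w, ?_⟩
      have h1 : (((T ∘L S) : H →ₗ[ℂ] H) ^ n) (((T ∘L S) : H →ₗ[ℂ] H) w)
          = (((T ∘L S) : H →ₗ[ℂ] H) ^ (n + 1)) w := by
        rw [pow_succ]; rfl
      have h2 : (((T ∘L S) : H →ₗ[ℂ] H) ^ (n + 1)) w
          = ((T ∘L S) : H →ₗ[ℂ] H) ((((T ∘L S) : H →ₗ[ℂ] H) ^ n) w) := by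
        rw [pow_succ']; rfl
      rw [h1, h2, hw]
      rfl
    by_cases hfin : FiniteDimensional ℂ M
    · left
      exact main M hfin hinv
    · right
      exact hfin
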